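/- Let p = 3, n ≥ 2, with t = (n−1)/2 if n is odd and t = n/2 if n is even, and d = 3^t + 3 + 1 = 3^t + 4. Then f_d(x) = x^d is a GAPN function on 𝔽_{3^n}. -/

import Mathlib

open scoped BigOperators

/-- `f` is a generalized almost perfect nonlinear (GAPN) function on `F`. -/
def IsGAPN (p : ℕ) {F : Type*} [Field F] (f : F → F) : Prop :=
  ∀ a : F, a ≠ 0 → ∀ b : F,
    {x : F | ∑ i ∈ Finset.range p, f (x + i • a) = b}.ncard ≤ p

section Aux

variable {n t : ℕ}

private lemma fixpt {F : Type*} [Field F] (w : F) (hw : w ^ 3 = w) :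
    ∀ k, w ^ 3 ^ k = w := by
  intro k
  induction k with
  | zero => simp
  | succ k ih =>
    have h : (3:ℕ) ^ (k+1) = 3 ^ k * 3 := by ring
    rw [h, pow_mul, ih, hw]

/-- Key lemma: every root of `z^{3^t} + z^3 + z` in `GF(3^n)` lies in `F_3`. -/
private lemma key (n t : ℕ) (hn : 2 ≤ n)
    (ht : t = if Odd n then (n - 1) / 2 else n / 2)
    (z : GaloisField 3 n) (hz : z ^ 3 ^ t + z ^ 3 + z = 0) : z ^ 3 = z := by
  haveI : Fact (Nat.Prime 3) := ⟨by norm_num⟩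
  haveI : Fintype (GaloisField 3 n) := Fintype.ofFinite _
  let F := GaloisField 3 n
  have hcard : Fintype.card F = 3 ^ n := by
    rw [← Nat.card_eq_fintype_card]
    exact GaloisField.card 3 n (by omega)
  have hzn : z ^ 3 ^ n = z := by
    rw [← hcard]; exact FiniteField.pow_card z
  have hz1 : z ^ 3 ^ t = -(z ^ 3) - z := by linear_combination hz
  have hcube : ∀ u v : F, (u + v) ^ (3:ℕ) = u ^ 3 + v ^ 3 := fun u v =>
    add_pow_char u v 3
  have hneg3 : ∀ u : F, (-u) ^ (3:ℕ) = -(u ^ 3) := fun u => Odd.neg_pow (by decide) u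
  have hnegt : ∀ u : F, (-u) ^ (3:ℕ) ^ t = -(u ^ 3 ^ t) := fun u =>
    Odd.neg_pow (Odd.pow (by decide)) u
  have hfrob : ∀ u v : F, (u + v) ^ (3:ℕ) ^ t = u ^ 3 ^ t + v ^ 3 ^ t := fun u v =>
    add_pow_char_pow u v 3 t
  have c1 : (-(z ^ 3) - z) ^ (3:ℕ) = -(z ^ 9) - z ^ 3 := by
    calc (-(z ^ 3) - z) ^ (3:ℕ) = (-(z ^ 3 + z)) ^ (3:ℕ) := by ring_nf
      _ = -((z ^ 3 + z) ^ 3) := hneg3 _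
      _ = -((z ^ 3) ^ 3 + z ^ 3) := by rw [hcube]
      _ = -(z ^ 9) - z ^ 3 := by ring
  have h2t : z ^ 3 ^ (2 * t) = z ^ 9 - z ^ 3 + z := by
    have e : z ^ 3 ^ (2 * t) = (z ^ 3 ^ t) ^ 3 ^ t := by
      rw [← pow_mul, ← pow_add, two_mul]
    rw [e, hz1]
    calc (-(z ^ 3) - z) ^ (3:ℕ) ^ t = (-(z ^ 3 + z)) ^ (3:ℕ) ^ t := by ring_nf
      _ = -((z ^ 3 + z) ^ (3:ℕ) ^ t) := hnegt _
      _ = -((z ^ 3) ^ (3:ℕ) ^ t + z ^ 3 ^ t) := by rw [hfrob]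
      _ = -((z ^ 3 ^ t) ^ 3 + z ^ 3 ^ t) := by
          rw [← pow_mul, ← pow_mul, mul_comm]
      _ = -((-(z ^ 3) - z) ^ (3:ℕ) + (-(z ^ 3) - z)) := by rw [hz1]
      _ = -((-(z ^ 9) - z ^ 3) + (-(z ^ 3) - z)) := by rw [c1]
      _ = z ^ 9 + 2 * z ^ 3 + z := by ring
      _ = z ^ 9 - z ^ 3 + z := by
          have h3 : (3:F) = 0 := by exact_mod_cast CharP.cast_eq_zero (GaloisField 3 n) 3
          linear_combination z ^ 3 * h3
  rcases Nat.even_or_odd n with he | ho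
  · -- even case : n = 2 * t
    have hnt : n = 2 * t := by
      have hno : ¬ Odd n := Nat.not_odd_iff_even.mpr he
      obtain ⟨k, hk⟩ := he
      rw [ht, if_neg hno]; omega
    have h2tz : z ^ 3 ^ (2 * t) = z := by rw [← hnt]; exact hzn
    have h9 : (z ^ 3) ^ 3 = z ^ 3 := by
      have := h2t.symm.trans h2tz
      linear_combination this
    have hiter := fixpt (z ^ 3) h9 (n - 1)
    have e : z = (z ^ 3) ^ 3 ^ (n - 1) := by
      rw [← pow_mul]
      rw [show 3 * 3 ^ (n - 1) = 3 ^ n by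
        rw [← pow_succ']; congr 1; omega]
      exact hzn.symm
    exact (e.trans hiter).symm
  · -- odd case : n = 2 * t + 1
    have hnt : n = 2 * t + 1 := by
      rw [ht, if_pos ho]
      have := Nat.odd_iff.mp ho
      omega
    have hcube3 : ∀ u v w : F, (u - v + w) ^ (3:ℕ) = u ^ 3 - v ^ 3 + w ^ 3 := by
      intro u v w
      calc (u - v + w) ^ (3:ℕ) = ((u + -v) + w) ^ (3:ℕ) := by rw [sub_eq_add_neg]
        _ = (u + -v) ^ 3 + w ^ 3 := hcube _ _
        _ = (u ^ 3 + (-v) ^ 3) + w ^ 3 := by rw [hcube]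
        _ = u ^ 3 - v ^ 3 + w ^ 3 := by rw [hneg3, sub_eq_add_neg]
    have h27 : z ^ 27 - z ^ 9 + z ^ 3 = z := by
      have e1 : z ^ 3 ^ n = (z ^ 3 ^ (2 * t)) ^ 3 := by
        rw [← pow_mul, ← pow_succ, ← hnt]
      have e2 : (z ^ 9 - z ^ 3 + z) ^ (3:ℕ) = z ^ 27 - z ^ 9 + z ^ 3 := by
        rw [hcube3]; ring
      calc z ^ 27 - z ^ 9 + z ^ 3 = (z ^ 9 - z ^ 3 + z) ^ (3:ℕ) := e2.symm
        _ = (z ^ 3 ^ (2 * t)) ^ 3 := by rw [h2t]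
        _ = z ^ 3 ^ n := e1.symm
        _ = z := hzn
    have h27e : z ^ 27 = z ^ 9 - z ^ 3 + z := by linear_combination h27
    have h81 : z ^ 81 = z := by
      calc z ^ 81 = (z ^ 27) ^ 3 := by ring
        _ = (z ^ 9 - z ^ 3 + z) ^ (3:ℕ) := by rw [h27e]
        _ = (z ^ 9) ^ 3 - (z ^ 3) ^ 3 + z ^ 3 := hcube3 _ _ _
        _ = z ^ 27 - z ^ 9 + z ^ 3 := by ring
        _ = z := h27
    have hz81 : z ^ (3:ℕ) ^ 4 = z := by norm_num; exact h81
    have hz4k : ∀ k, z ^ (3:ℕ) ^ (4 * k) = z := by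
      intro k
      induction k with
      | zero => simp
      | succ k ih =>
        have h : (3:ℕ) ^ (4 * (k + 1)) = 3 ^ (4 * k) * 3 ^ 4 := by
          rw [← pow_add]; ring_nf
        rw [h, pow_mul, ih, hz81]
    have hr : z ^ (3:ℕ) ^ (n % 4) = z := by
      calc z ^ (3:ℕ) ^ (n % 4) = (z ^ (3:ℕ) ^ (4 * (n / 4))) ^ (3:ℕ) ^ (n % 4) := by
            rw [hz4k]
        _ = z ^ ((3:ℕ) ^ (4 * (n / 4)) * 3 ^ (n % 4)) := (pow_mul _ _ _).symm
        _ = z ^ (3:ℕ) ^ n := by rw [← pow_add, Nat.div_add_mod]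
        _ = z := hzn
    have hmod : n % 4 = 1 ∨ n % 4 = 3 := by
      have := Nat.odd_iff.mp ho
      omega
    rcases hmod with h1 | h1
    · rw [h1] at hr; simpa using hr
    · rw [h1] at hr
      have hr' : z ^ 27 = z := by
        have : (3:ℕ) ^ 3 = 27 := by norm_num
        rwa [this] at hr
      calc z ^ 3 = (z ^ 27) ^ 3 := by rw [hr']
        _ = z ^ 81 := by ring
        _ = z := h81

end Aux

theorem stmt_9 (n t : ℕ) (hn : 2 ≤ n)
    (ht : t = if Odd n then (n - 1) / 2 else n / 2) :
    IsGAPN 3 (fun x : GaloisField 3 n => x ^ (3 ^ t + 4)) := by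
  haveI : Fact (Nat.Prime 3) := ⟨by norm_num⟩
  intro a ha b
  have h3 : (3 : GaloisField 3 n) = 0 := by exact_mod_cast CharP.cast_eq_zero (GaloisField 3 n) 3
  -- the summed function is linearized
  have sum3 : ∀ x : GaloisField 3 n, ∑ i ∈ Finset.range 3, (x + i • a) ^ (3 ^ t + 4)
      = 2 * a ^ 4 * x ^ 3 ^ t + 2 * (a ^ 3 ^ t * a) * x ^ 3
        + 2 * (a ^ 3 ^ t * a ^ 3) * x := by
    intro x
    have e0 : ∑ i ∈ Finset.range 3, (x + i • a) ^ (3 ^ t + 4)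
        = x ^ (3 ^ t + 4) + (x + a) ^ (3 ^ t + 4) + (x - a) ^ (3 ^ t + 4) := by
      rw [Finset.sum_range_succ, Finset.sum_range_succ, Finset.sum_range_succ,
        Finset.sum_range_zero]
      have k0 : x + (0:ℕ) • a = x := by simp
      have k1 : x + (1:ℕ) • a = x + a := by simp
      have k2 : x + (2:ℕ) • a = x - a := by
        have h2 : ((2:ℕ) : GaloisField 3 n) = -1 := by push_cast; linear_combination h3
        rw [nsmul_eq_mul, h2]; ring
      rw [k0, k1, k2]; ring
    have hxa : (x + a) ^ (3:ℕ) ^ t = x ^ 3 ^ t + a ^ 3 ^ t := add_pow_char_pow _ _ 3 t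
    have hxs : (x - a) ^ (3:ℕ) ^ t = x ^ 3 ^ t - a ^ 3 ^ t := sub_pow_char_pow _ _ t
    rw [e0, pow_add, pow_add, pow_add, hxa, hxs]
    linear_combination (x ^ 3 ^ t * (x ^ 4 + 4 * x ^ 2 * a ^ 2)
      + a ^ 3 ^ t * (2 * x ^ 3 * a + 2 * x * a ^ 3)) * h3
  by_cases hne : ({x : GaloisField 3 n | ∑ i ∈ Finset.range 3,
      (fun x : GaloisField 3 n => x ^ (3 ^ t + 4)) (x + i • a) = b}).Nonempty
  · obtain ⟨x₀, hx₀⟩ := hne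
    have hx₀' : ∑ i ∈ Finset.range 3, (x₀ + i • a) ^ (3 ^ t + 4) = b := hx₀
    have hsub : {x : GaloisField 3 n | ∑ i ∈ Finset.range 3,
        (fun x : GaloisField 3 n => x ^ (3 ^ t + 4)) (x + i • a) = b}
        ⊆ {x₀, x₀ + a, x₀ - a} := by
      intro x hx
      have hx' : ∑ i ∈ Finset.range 3, (x + i • a) ^ (3 ^ t + 4) = b := hx
      rw [sum3] at hx' hx₀'
      set z : GaloisField 3 n := (x - x₀) * a⁻¹ with hzdef
      have hxz : x = x₀ + a * z := by
        rw [hzdef]; field_simp; ring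
      have h2ne : (2 : GaloisField 3 n) ≠ 0 := by
        intro h
        have : (1 : GaloisField 3 n) = 0 := by linear_combination h3 - h
        exact one_ne_zero this
      have hrel : z ^ 3 ^ t + z ^ 3 + z = 0 := by
        have h1 : 2 * a ^ 4 * x ^ 3 ^ t + 2 * (a ^ 3 ^ t * a) * x ^ 3
            + 2 * (a ^ 3 ^ t * a ^ 3) * x
            = 2 * a ^ 4 * x₀ ^ 3 ^ t + 2 * (a ^ 3 ^ t * a) * x₀ ^ 3
            + 2 * (a ^ 3 ^ t * a ^ 3) * x₀ := hx'.trans hx₀'.symm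
        rw [hxz] at h1
        have e1 : (x₀ + a * z) ^ (3:ℕ) ^ t = x₀ ^ 3 ^ t + a ^ 3 ^ t * z ^ 3 ^ t := by
          rw [add_pow_char_pow x₀ (a*z) 3 t, mul_pow]
        have e2 : (x₀ + a * z) ^ (3:ℕ) = x₀ ^ 3 + a ^ 3 * z ^ 3 := by
          rw [add_pow_char x₀ (a * z) 3, mul_pow]
        rw [e1, e2] at h1
        have hmul : (2 : GaloisField 3 n) * a ^ 3 ^ t * a ^ 4 * (z ^ 3 ^ t + z ^ 3 + z) = 0 := by
          linear_combination h1
        have hc : (2 : GaloisField 3 n) * a ^ 3 ^ t * a ^ 4 ≠ 0 := by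
          apply mul_ne_zero (mul_ne_zero h2ne (pow_ne_zero _ ha)) (pow_ne_zero _ ha)
        exact (mul_eq_zero.mp hmul).resolve_left hc
      have hz3 : z ^ 3 = z := key n t hn ht z hrel
      have hsplit : z * (z - 1) * (z + 1) = 0 := by linear_combination hz3
      rcases mul_eq_zero.mp hsplit with h | h
      · rcases mul_eq_zero.mp h with h | h
        · left; rw [hxz, h]; ring
        · right; left; rw [hxz, show z = 1 by linear_combination h]; ring
      · right; right
        rw [hxz, show z = -1 by linear_combination h]
        show x₀ + a * (-1) = x₀ - a
        ring
    have h1 : ({x₀, x₀ + a, x₀ - a} : Set (GaloisField 3 n)).ncard ≤ 3 := by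
      apply (Set.ncard_insert_le _ _).trans
      have h2 := Set.ncard_insert_le (x₀ + a) ({x₀ - a} : Set (GaloisField 3 n))
      rw [Set.ncard_singleton] at h2
      omega
    exact (Set.ncard_le_ncard hsub (Set.toFinite _)).trans h1
  · rw [Set.not_nonempty_iff_eq_empty] at hne
    rw [hne]
    simp
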